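/- The autonomous domination number of the cycle C_n on n vertices is n − 3, for all n ≥ 6. -/

import Mathlib

open SimpleGraph

variable {V : Type*} [DecidableEq V]

/-- `S` is a dominating set of `G`. -/
def Dominates (G : SimpleGraph V) (S : Finset V) : Prop :=
  ∀ v : V, v ∈ S ∨ ∃ u ∈ S, G.Adj u v

/-- Dominating sets `S` and `S'` are adjacent: they differ by moving one
guard along an edge of `G`. -/
def AdjacentSets (G : SimpleGraph V) (S S' : Finset V) : Prop :=
  ∃ v v', v ∈ S ∧ v' ∉ S ∧ G.Adj v v' ∧ S' = insert v' (S.erase v)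

/-- `S` is a secure dominating set. -/
def SecureDominating (G : SimpleGraph V) (S : Finset V) : Prop :=
  Dominates G S ∧ ∀ v ∉ S, ∃ S', Dominates G S' ∧ AdjacentSets G S S' ∧ v ∈ S'

/-- An autonomously dominating family. -/
def AutFamily (G : SimpleGraph V) (F : Set (Finset V)) : Prop :=
  (∀ S ∈ F, Dominates G S) ∧
  (∀ S ∈ F, ∀ v ∉ S, ∃ S' ∈ F, AdjacentSets G S S' ∧ v ∈ S') ∧
  (∀ S ∈ F, ∀ S', Dominates G S' → AdjacentSets G S S' → S' ∈ F)

/-- An autonomously dominating set. -/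
def AutDomSet (G : SimpleGraph V) (S : Finset V) : Prop :=
  ∃ F, AutFamily G F ∧ S ∈ F

/-- The autonomous domination number. -/
noncomputable def autDomNum (G : SimpleGraph V) : ℕ :=
  sInf {k | ∃ S : Finset V, AutDomSet G S ∧ S.card = k}

/-- An eternally dominating family (no closure condition). -/
def EternalFamily (G : SimpleGraph V) (F : Set (Finset V)) : Prop :=
  (∀ S ∈ F, Dominates G S) ∧
  (∀ S ∈ F, ∀ v ∉ S, ∃ S' ∈ F, AdjacentSets G S S' ∧ v ∈ S')

/-- The eternal domination number. -/
noncomputable def eternalDomNum (G : SimpleGraph V) : ℕ :=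
  sInf {k | ∃ (F : Set (Finset V)) (S : Finset V),
    EternalFamily G F ∧ S ∈ F ∧ S.card = k}

/-- The domination number. -/
noncomputable def domNum (G : SimpleGraph V) : ℕ :=
  sInf {k | ∃ S : Finset V, Dominates G S ∧ S.card = k}

open SimpleGraph Finset
open Fin.NatCast Fin.CommRing

section Aux
variable {m : ℕ}

def NoTriple (T : Finset (Fin (m+6))) : Prop :=
  ∀ v : Fin (m+6), ¬(v ∈ T ∧ v + 1 ∈ T ∧ v + 2 ∈ T)

lemma fcast_inj {i j : ℕ} (hi : i < m+6) (hj : j < m+6)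
    (h : (i : Fin (m+6)) = (j : Fin (m+6))) : i = j := by
  have := congrArg Fin.val h
  rwa [Fin.val_cast_of_lt hi, Fin.val_cast_of_lt hj] at this

lemma shift_inj {a : Fin (m+6)} {i j : ℕ} (hi : i < m+6) (hj : j < m+6)
    (h : a + (i : Fin (m+6)) = a + (j : Fin (m+6))) : i = j :=
  fcast_inj hi hj (by exact add_left_cancel h)

lemma shift_ne {a x y : Fin (m+6)} {i j : ℕ} (hx : x = a + (i:Fin (m+6)))
    (hy : y = a + (j:Fin (m+6))) (hi : i < m+6) (hj : j < m+6) (hij : i ≠ j) :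
    x ≠ y := by
  subst hx hy; exact fun h => hij (shift_inj hi hj h)

lemma adj_succ (a : Fin (m+6)) : (cycleGraph (m+6)).Adj a (a+1) := by
  rw [cycleGraph_adj]; right; ring

lemma adj_iff {u v : Fin (m+6)} : (cycleGraph (m+6)).Adj u v ↔ u = v + 1 ∨ u = v - 1 := by
  rw [cycleGraph_adj]
  constructor
  · rintro (h | h)
    · left; linear_combination h
    · right; linear_combination -h
  · rintro (rfl | rfl)
    · left; ring
    · right; ring

lemma dominates_iff {S : Finset (Fin (m+6))} :
    Dominates (cycleGraph (m+6)) S ↔ NoTriple Sᶜ := by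
  constructor
  · intro hd v ⟨h0, h1, h2⟩
    rcases hd (v+1) with h | ⟨u, hu, hadj⟩
    · exact (mem_compl.mp h1) h
    · rcases adj_iff.mp hadj with rfl | rfl
      · exact (mem_compl.mp h2) (by rwa [show v+2 = v+1+1 from by ring])
      · exact (mem_compl.mp h0) (by rwa [show v = v+1-1 from by ring])
  · intro hnt v
    by_cases hv : v ∈ S
    · exact Or.inl hv
    · right
      have h := hnt (v-1)
      simp only [mem_compl] at h
      have h1 : (v-1) + 1 = v := by ring
      have h2 : (v-1) + 2 = v + 1 := by ring
      rw [h1, h2] at h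
      by_cases hvm : v - 1 ∈ S
      · exact ⟨v-1, hvm, adj_iff.mpr (Or.inr rfl)⟩
      · by_cases hvp : v + 1 ∈ S
        · exact ⟨v+1, hvp, adj_iff.mpr (Or.inl rfl)⟩
        · exact absurd ⟨hvm, hv, hvp⟩ h

lemma compl_move {S : Finset (Fin (m+6))} {g h : Fin (m+6)} (hgh : g ≠ h) :
    (insert h (S.erase g))ᶜ = insert g (Sᶜ.erase h) := by
  ext x
  simp only [mem_compl, mem_insert, mem_erase]
  by_cases h1 : x = g <;> by_cases h2 : x = h <;> simp [h1, h2] <;> tauto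

lemma card_move {S : Finset (Fin (m+6))} {g h : Fin (m+6)} (hg : g ∈ S) (hh : h ∉ S) :
    (insert h (S.erase g)).card = S.card := by
  rw [card_insert_of_notMem (fun hc => hh (mem_of_mem_erase hc)),
    card_erase_of_mem hg]
  have : 0 < S.card := card_pos.mpr ⟨g, hg⟩
  omega

end Aux
section Defense
variable {m : ℕ}

lemma defense {T : Finset (Fin (m+6))} (hT : NoTriple T) (hcard : T.card = 3)
    {v : Fin (m+6)} (hv : v ∈ T) :
    ∃ u, u ∉ T ∧ (cycleGraph (m+6)).Adj u v ∧ NoTriple (insert u (T.erase v)) := by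
  have hcerase : (T.erase v).card = 2 := by rw [card_erase_of_mem hv, hcard]
  have three : ∀ x y z : Fin (m+6), x ∈ T.erase v → y ∈ T.erase v → z ∈ T.erase v →
      x ≠ y → x ≠ z → y ≠ z → False := by
    intro x y z hx hy hz hxy hxz hyz
    have hsub : ({x, y, z} : Finset (Fin (m+6))) ⊆ T.erase v := by
      intro w hw; simp only [mem_insert, mem_singleton] at hw
      rcases hw with rfl | rfl | rfl <;> assumption
    have := card_le_card hsub
    rw [hcerase, card_insert_of_notMem (by simp [hxy, hxz]),
      card_insert_of_notMem (by simp [hyz]), card_singleton] at this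
    omega
  have hvne : v ≠ v - 1 := shift_ne (a := v - 1) (i := 1) (j := 0)
    (by push_cast; ring) (by push_cast; ring) (by omega) (by omega) (by omega)
  have hvpne : v ≠ v + 1 := shift_ne (a := v) (i := 0) (j := 1)
    (by push_cast; ring) (by push_cast; ring) (by omega) (by omega) (by omega)
  -- helper for triples in insert (v-1) (T.erase v)
  have minusAnalysis : ∀ w : Fin (m+6),
      (w = v - 1 ∨ (w ≠ v ∧ w ∈ T)) →
      (w + 1 = v - 1 ∨ (w + 1 ≠ v ∧ w + 1 ∈ T)) →
      (w + 2 = v - 1 ∨ (w + 2 ≠ v ∧ w + 2 ∈ T)) →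
      (w = v - 3 ∧ v - 3 ∈ T ∧ v - 2 ∈ T) := by
    intro w h0 h1 h2
    by_cases e0 : w = v - 1
    · exfalso
      subst e0
      rw [show v - 1 + 1 = v from by ring] at h1
      rcases h1 with h1 | ⟨h1, -⟩
      · exact hvne h1
      · exact h1 rfl
    by_cases e1 : w + 1 = v - 1
    · exfalso
      rw [show w + 2 = w + 1 + 1 from by ring, e1, show v - 1 + 1 = v from by ring] at h2
      rcases h2 with h2 | ⟨h2, -⟩
      · exact hvne h2
      · exact h2 rfl
    by_cases e2 : w + 2 = v - 1
    · have hw : w = v - 3 := by linear_combination e2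
      have hw0 : w ∈ T := by
        rcases h0 with h0 | h0
        · exact absurd h0 e0
        · exact h0.2
      have hw1 : w + 1 ∈ T := by
        rcases h1 with h1 | h1
        · exact absurd h1 e1
        · exact h1.2
      exact ⟨hw, by rwa [hw] at hw0,
        by rwa [hw, show v - 3 + 1 = v - 2 from by ring] at hw1⟩
    · exfalso
      have f : ∀ x : Fin (m+6), (x = v - 1 ∨ (x ≠ v ∧ x ∈ T)) → x ≠ v - 1 → x ∈ T := by
        rintro x (hx | hx) hne
        · exact absurd hx hne
        · exact hx.2
      exact hT w ⟨f w h0 e0, f (w+1) h1 e1, f (w+2) h2 e2⟩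
  by_cases hp : v + 1 ∈ T
  · -- use u = v - 1
    have hm : v - 1 ∉ T := by
      intro hm
      exact hT (v-1) ⟨hm, by rwa [show v - 1 + 1 = v from by ring],
        by rwa [show v - 1 + 2 = v + 1 from by ring]⟩
    refine ⟨v - 1, hm, adj_iff.mpr (Or.inr rfl), ?_⟩
    intro w ⟨h0, h1, h2⟩
    simp only [mem_insert, mem_erase] at h0 h1 h2
    obtain ⟨hw, hw3, hw2⟩ := minusAnalysis w h0 h1 h2
    -- v+1, v-3, v-2 are three distinct elements of T.erase v
    refine three (v+1) (v-3) (v-2) (mem_erase.mpr ⟨Ne.symm hvpne, hp⟩)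
      (mem_erase.mpr ⟨?_, hw3⟩) (mem_erase.mpr ⟨?_, hw2⟩) ?_ ?_ ?_
    · exact shift_ne (a := v - 3) (i := 0) (j := 3) (by push_cast; ring)
        (by push_cast; ring) (by omega) (by omega) (by omega)
    · exact shift_ne (a := v - 3) (i := 1) (j := 3) (by push_cast; ring)
        (by push_cast; ring) (by omega) (by omega) (by omega)
    · exact shift_ne (a := v - 3) (i := 4) (j := 0) (by push_cast; ring)
        (by push_cast; ring) (by omega) (by omega) (by omega)
    · exact shift_ne (a := v - 3) (i := 4) (j := 1) (by push_cast; ring)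
        (by push_cast; ring) (by omega) (by omega) (by omega)
    · exact shift_ne (a := v - 3) (i := 0) (j := 1) (by push_cast; ring)
        (by push_cast; ring) (by omega) (by omega) (by omega)
  · by_cases hm : v - 1 ∈ T
    · -- use u = v + 1
      refine ⟨v + 1, hp, adj_iff.mpr (Or.inl rfl), ?_⟩
      intro w ⟨h0, h1, h2⟩
      simp only [mem_insert, mem_erase] at h0 h1 h2
      by_cases e0 : w = v + 1
      · subst e0
        have hw1 : v + 2 ∈ T := by
          rw [show v + 1 + 1 = v + 2 from by ring] at h1
          rcases h1 with h1 | h1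
          · exact absurd h1 (shift_ne (a := v) (i := 2) (j := 1)
              (by push_cast; ring) (by push_cast; ring) (by omega) (by omega) (by omega))
          · exact h1.2
        have hw2 : v + 3 ∈ T := by
          rw [show v + 1 + 2 = v + 3 from by ring] at h2
          rcases h2 with h2 | h2
          · exact absurd h2 (shift_ne (a := v) (i := 3) (j := 1)
              (by push_cast; ring) (by push_cast; ring) (by omega) (by omega) (by omega))
          · exact h2.2
        refine three (v-1) (v+2) (v+3) (mem_erase.mpr ⟨Ne.symm hvne, hm⟩)
          (mem_erase.mpr ⟨?_, hw1⟩) (mem_erase.mpr ⟨?_, hw2⟩) ?_ ?_ ?_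
        · exact shift_ne (a := v - 1) (i := 3) (j := 1) (by push_cast; ring)
            (by push_cast; ring) (by omega) (by omega) (by omega)
        · exact shift_ne (a := v - 1) (i := 4) (j := 1) (by push_cast; ring)
            (by push_cast; ring) (by omega) (by omega) (by omega)
        · exact shift_ne (a := v - 1) (i := 0) (j := 3) (by push_cast; ring)
            (by push_cast; ring) (by omega) (by omega) (by omega)
        · exact shift_ne (a := v - 1) (i := 0) (j := 4) (by push_cast; ring)
            (by push_cast; ring) (by omega) (by omega) (by omega)
        · exact shift_ne (a := v - 1) (i := 3) (j := 4) (by push_cast; ring)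
            (by push_cast; ring) (by omega) (by omega) (by omega)
      by_cases e1 : w + 1 = v + 1
      · have hwv : w = v := add_right_cancel e1
        rcases h0 with h0 | h0
        · exact hvpne (by rw [← h0, hwv])
        · exact h0.1 hwv
      by_cases e2 : w + 2 = v + 1
      · have hwv : w + 1 = v := by linear_combination e2
        rcases h1 with h1 | h1
        · exact hvpne (by rw [hwv] at h1; exact h1)
        · exact h1.1 hwv
      · have f : ∀ x : Fin (m+6), (x = v + 1 ∨ (x ≠ v ∧ x ∈ T)) → x ≠ v + 1 → x ∈ T := by
          rintro x (hx | hx) hne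
          · exact absurd hx hne
          · exact hx.2
        exact hT w ⟨f w h0 e0, f (w+1) h1 e1, f (w+2) h2 e2⟩
    · -- v ± 1 both not in T
      by_cases hok : NoTriple (insert (v-1) (T.erase v))
      · exact ⟨v - 1, hm, adj_iff.mpr (Or.inr rfl), hok⟩
      · simp only [NoTriple, not_forall, not_not] at hok
        obtain ⟨w, h0, h1, h2⟩ := hok
        simp only [mem_insert, mem_erase] at h0 h1 h2
        obtain ⟨-, hv3, hv2⟩ := minusAnalysis w h0 h1 h2
        have hne1 : v ≠ v - 2 := shift_ne (a := v - 3) (i := 3) (j := 1)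
          (by push_cast; ring) (by push_cast; ring) (by omega) (by omega) (by omega)
        have hne2 : v ≠ v - 3 := shift_ne (a := v - 3) (i := 3) (j := 0)
          (by push_cast; ring) (by push_cast; ring) (by omega) (by omega) (by omega)
        have hne3 : v - 2 ≠ v - 3 := shift_ne (a := v - 3) (i := 1) (j := 0)
          (by push_cast; ring) (by push_cast; ring) (by omega) (by omega) (by omega)
        have hTeq : ({v, v-2, v-3} : Finset (Fin (m+6))) = T := by
          apply eq_of_subset_of_card_le
          · intro x hx; simp only [mem_insert, mem_singleton] at hx
            rcases hx with rfl | rfl | rfl <;> assumption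
          · rw [hcard, card_insert_of_notMem (by simp [hne1, hne2]),
              card_insert_of_notMem (by simp [hne3]), card_singleton]
        refine ⟨v + 1, hp, adj_iff.mpr (Or.inl rfl), ?_⟩
        intro w' ⟨h0', h1', h2'⟩
        simp only [mem_insert, mem_erase, ← hTeq, mem_singleton] at h0' h1' h2'
        have mem3 : ∀ x : Fin (m+6),
            (x = v + 1 ∨ (x ≠ v ∧ (x = v ∨ x = v - 2 ∨ x = v - 3))) →
            x = v + 1 ∨ x = v - 2 ∨ x = v - 3 := by
          rintro x (hx | ⟨hne, (hx | hx | hx)⟩)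
          · exact Or.inl hx
          · exact absurd hx hne
          · exact Or.inr (Or.inl hx)
          · exact Or.inr (Or.inr hx)
        have nvp2 : ∀ x : Fin (m+6), x = v + 2 →
            x = v + 1 ∨ x = v - 2 ∨ x = v - 3 → False := by
          rintro x rfl (hx | hx | hx)
          · exact shift_ne (a := v - 3) (i := 5) (j := 4) (by push_cast; ring)
              (by push_cast; ring) (by omega) (by omega) (by omega) hx
          · exact shift_ne (a := v - 3) (i := 5) (j := 1) (by push_cast; ring)
              (by push_cast; ring) (by omega) (by omega) (by omega) hx
          · exact shift_ne (a := v - 3) (i := 5) (j := 0) (by push_cast; ring)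
              (by push_cast; ring) (by omega) (by omega) (by omega) hx
        have nvm1 : ∀ x : Fin (m+6), x = v - 1 →
            x = v + 1 ∨ x = v - 2 ∨ x = v - 3 → False := by
          rintro x rfl (hx | hx | hx)
          · exact shift_ne (a := v - 3) (i := 2) (j := 4) (by push_cast; ring)
              (by push_cast; ring) (by omega) (by omega) (by omega) hx
          · exact shift_ne (a := v - 3) (i := 2) (j := 1) (by push_cast; ring)
              (by push_cast; ring) (by omega) (by omega) (by omega) hx
          · exact shift_ne (a := v - 3) (i := 2) (j := 0) (by push_cast; ring)
              (by push_cast; ring) (by omega) (by omega) (by omega) hx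
        rcases mem3 _ h0' with e | e | e
        · exact nvp2 (w' + 1) (by rw [e]; ring) (mem3 _ h1')
        · exact nvm1 (w' + 1) (by rw [e]; ring) (mem3 _ h1')
        · exact nvm1 (w' + 2) (by rw [e]; ring) (mem3 _ h2')

end Defense
section Upper
variable {m : ℕ}

def F0 (m : ℕ) : Set (Finset (Fin (m+6))) :=
  {S | Dominates (cycleGraph (m+6)) S ∧ S.card = m+3}

lemma autFamily_F0 : AutFamily (cycleGraph (m+6)) (F0 m) := by
  refine ⟨fun S hS => hS.1, ?_, ?_⟩
  · intro S hS v hv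
    have hnt : NoTriple Sᶜ := dominates_iff.mp hS.1
    have hcardc : Sᶜ.card = 3 := by
      rw [card_compl, Fintype.card_fin, hS.2]; omega
    obtain ⟨u, huT, hadj, hnt'⟩ := defense hnt hcardc (mem_compl.mpr hv)
    have hu : u ∈ S := by simp only [mem_compl, not_not] at huT; exact huT
    refine ⟨insert v (S.erase u), ⟨?_, ?_⟩, ⟨u, v, hu, hv, hadj, rfl⟩, mem_insert_self _ _⟩
    · rw [dominates_iff, compl_move hadj.ne]
      exact hnt'
    · rw [card_move hu hv]; exact hS.2
  · rintro S hS S' hdom ⟨x, y, hx, hy, hxy, rfl⟩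
    exact ⟨hdom, by rw [card_move hx hy]; exact hS.2⟩

lemma upper_mem :
    (m+3) ∈ {k | ∃ S : Finset (Fin (m+6)), AutDomSet (cycleGraph (m+6)) S ∧ S.card = k} := by
  have d01 : (0 : Fin (m+6)) ≠ 1 := shift_ne (a := 0) (i := 0) (j := 1)
    (by push_cast; ring) (by push_cast; ring) (by omega) (by omega) (by omega)
  have d03 : (0 : Fin (m+6)) ≠ 3 := shift_ne (a := 0) (i := 0) (j := 3)
    (by push_cast; ring) (by push_cast; ring) (by omega) (by omega) (by omega)
  have d13 : (1 : Fin (m+6)) ≠ 3 := shift_ne (a := 0) (i := 1) (j := 3)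
    (by push_cast; ring) (by push_cast; ring) (by omega) (by omega) (by omega)
  have hcard3 : ({0, 1, 3} : Finset (Fin (m+6))).card = 3 := by
    rw [card_insert_of_notMem (by simp [d01, d03]),
      card_insert_of_notMem (by simp [d13]), card_singleton]
  have hnt : NoTriple ({0, 1, 3} : Finset (Fin (m+6))) := by
    intro w hw
    simp only [mem_insert, mem_singleton] at hw
    obtain ⟨h0, h1, h2⟩ := hw
    have refute : ∀ x : Fin (m+6), ∀ i : ℕ, i < m+6 → x = ↑i → i ≠ 0 → i ≠ 1 → i ≠ 3 →
        (x = 0 ∨ x = 1 ∨ x = 3) → False := by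
      rintro x i hi rfl hi0 hi1 hi3 (hx | hx | hx)
      · exact shift_ne (a := 0) (i := i) (j := 0) (by push_cast; ring)
          (by push_cast; ring) hi (by omega) hi0 hx
      · exact shift_ne (a := 0) (i := i) (j := 1) (by push_cast; ring)
          (by push_cast; ring) hi (by omega) hi1 hx
      · exact shift_ne (a := 0) (i := i) (j := 3) (by push_cast; ring)
          (by push_cast; ring) hi (by omega) hi3 hx
    rcases h0 with rfl | rfl | rfl
    · exact refute (0 + 2) 2 (by omega) (by push_cast; ring) (by omega) (by omega)
        (by omega) h2
    · exact refute (1 + 1) 2 (by omega) (by push_cast; ring) (by omega) (by omega)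
        (by omega) h1
    · exact refute (3 + 1) 4 (by omega) (by push_cast; ring) (by omega) (by omega)
        (by omega) h1
  refine ⟨({0, 1, 3} : Finset (Fin (m+6)))ᶜ, ⟨F0 m, autFamily_F0, ?_, ?_⟩, ?_⟩
  · rw [dominates_iff, compl_compl]
    exact hnt
  · rw [card_compl, Fintype.card_fin, hcard3]; omega
  · rw [card_compl, Fintype.card_fin, hcard3]; omega

end Upper
section Steps
variable {m : ℕ}

/-- One guard-move viewed on the complement ("hole") side. -/
def StepT (T T' : Finset (Fin (m+6))) : Prop :=
  ∃ h g : Fin (m+6), h ∈ T ∧ g ∉ T ∧ (cycleGraph (m+6)).Adj g h ∧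
    T' = insert g (T.erase h) ∧ NoTriple T'

lemma stepT_card {T T' : Finset (Fin (m+6))} (h : StepT T T') : T'.card = T.card := by
  obtain ⟨x, y, hx, hy, -, rfl, -⟩ := h
  exact card_move hx hy

lemma reach_card {T T' : Finset (Fin (m+6))} (h : Relation.ReflTransGen StepT T T') :
    T'.card = T.card := by
  induction h with
  | refl => rfl
  | tail _ hbc ih => rw [stepT_card hbc, ih]

lemma reach_mem_family {F : Set (Finset (Fin (m+6)))}
    (hF : AutFamily (cycleGraph (m+6)) F) {T T' : Finset (Fin (m+6))}
    (h : Relation.ReflTransGen StepT T T') (hT : Tᶜ ∈ F) : T'ᶜ ∈ F := by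
  induction h with
  | refl => exact hT
  | @tail b c hab hbc ih =>
    obtain ⟨x, y, hx, hy, hadj, rfl, hnt⟩ := hbc
    have hcompl : (insert y (b.erase x))ᶜ = insert x (bᶜ.erase y) :=
      compl_move (Ne.symm hadj.ne)
    refine hF.2.2 bᶜ ih _ ?_ ⟨y, x, mem_compl.mpr hy, ?_, hadj, hcompl⟩
    · rw [dominates_iff, compl_compl]
      exact hnt
    · exact fun hc => (mem_compl.mp hc) hx

lemma moveBack {T : Finset (Fin (m+6))} (hT : NoTriple T) {q : Fin (m+6)}
    (hq : q ∈ T) (h1 : q - 1 ∉ T) (h2 : q - 2 ∉ T ∨ q - 3 ∉ T) :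
    StepT T (insert (q-1) (T.erase q)) := by
  have hqq1 : q ≠ q - 1 := shift_ne (a := q - 1) (i := 1) (j := 0) (by push_cast; ring)
      (by push_cast; ring) (by omega) (by omega) (by omega)
  refine ⟨q, q - 1, hq, h1, adj_iff.mpr (Or.inr rfl), rfl, ?_⟩
  intro w ⟨hw0, hw1, hw2⟩
  simp only [mem_insert, mem_erase] at hw0 hw1 hw2
  by_cases e0 : w = q - 1
  · have hwq : w + 1 = q := by rw [e0]; ring
    rcases hw1 with h | h
    · exact hqq1 (by rw [← h, hwq])
    · exact h.1 hwq
  by_cases e1 : w + 1 = q - 1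
  · have hwq : w + 2 = q := by linear_combination e1
    rcases hw2 with h | h
    · exact hqq1 (by rw [← h, hwq])
    · exact h.1 hwq
  by_cases e2 : w + 2 = q - 1
  · have hwq : w = q - 3 := by linear_combination e2
    have hw0' : w ∈ T := by
      rcases hw0 with hw0 | hw0
      · exact absurd hw0 e0
      · exact hw0.2
    have hw1' : w + 1 ∈ T := by
      rcases hw1 with hw1 | hw1
      · exact absurd hw1 e1
      · exact hw1.2
    rcases h2 with h2 | h2
    · exact h2 (by rwa [show q - 2 = w + 1 from by rw [hwq]; ring])
    · exact h2 (by rwa [← hwq])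
  · have f : ∀ x : Fin (m+6), (x = q - 1 ∨ (x ≠ q ∧ x ∈ T)) → x ≠ q - 1 → x ∈ T := by
      rintro x (hx | hx) hne
      · exact absurd hx hne
      · exact hx.2
    exact hT w ⟨f w hw0 e0, f (w+1) hw1 e1, f (w+2) hw2 e2⟩

lemma natCast_self_fin : ((m+6 : ℕ) : Fin (m+6)) = ((0:ℕ) : Fin (m+6)) := by
  rw [Fin.natCast_self, Nat.cast_zero]

/-- March the hole at `a + d` backwards to `a + k`. -/
lemma pull {a : Fin (m+6)} {k : ℕ} (hk : 1 ≤ k) :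
    ∀ e d : ℕ, d = k + e → d ≤ m+5 → ∀ T : Finset (Fin (m+6)), NoTriple T →
    a + (d : Fin (m+6)) ∈ T →
    (∀ j : ℕ, k ≤ j → j < d → a + (j : Fin (m+6)) ∉ T) →
    (a + (k : Fin (m+6)) - 1 ∉ T ∨ a + (k : Fin (m+6)) - 2 ∉ T) →
    Relation.ReflTransGen StepT T (insert (a + (k : Fin (m+6))) (T.erase (a + (d : Fin (m+6))))) ∧
      NoTriple (insert (a + (k : Fin (m+6))) (T.erase (a + (d : Fin (m+6))))) := by
  intro e
  induction e with
  | zero =>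
    intro d hd hdn T hT hmem hgap hside
    have hd' : d = k := by omega
    subst hd'
    rw [insert_erase hmem]
    exact ⟨Relation.ReflTransGen.refl, hT⟩
  | succ e ih =>
    intro d hd hdn T hT hmem hgap hside
    have hd1 : 1 ≤ d := by omega
    have hkd : k < d := by omega
    have hcast1 : a + (d : Fin (m+6)) - 1 = a + ((d - 1 : ℕ) : Fin (m+6)) := by
      rw [Nat.cast_sub hd1]; push_cast; ring
    have hstep : StepT T (insert (a + ((d-1:ℕ) : Fin (m+6))) (T.erase (a + (d : Fin (m+6))))) := by
      rw [← hcast1]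
      apply moveBack hT hmem
      · rw [hcast1]; exact hgap (d-1) (by omega) (by omega)
      · by_cases hde : d = k + 1
        · have c2 : a + (d : Fin (m+6)) - 2 = a + (k : Fin (m+6)) - 1 := by
            subst hde; push_cast; ring
          have c3 : a + (d : Fin (m+6)) - 3 = a + (k : Fin (m+6)) - 2 := by
            subst hde; push_cast; ring
          rw [c2, c3]; exact hside
        · left
          have c2 : a + (d : Fin (m+6)) - 2 = a + ((d - 2 : ℕ) : Fin (m+6)) := by
            rw [Nat.cast_sub (by omega : 2 ≤ d)]; push_cast; ring
          rw [c2]; exact hgap (d-2) (by omega) (by omega)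
    set Tm := insert (a + ((d-1:ℕ) : Fin (m+6))) (T.erase (a + (d : Fin (m+6)))) with hTm
    have hntm : NoTriple Tm := by
      obtain ⟨x, y, hx1, hx2, hx3, hx4, hx5⟩ := hstep
      exact hx5
    have key : ∀ i : ℕ, i < m+6 → i ≠ d - 1 → (a + (i : Fin (m+6)) ∈ Tm ↔
        (a + (i : Fin (m+6)) ∈ T ∧ a + (i : Fin (m+6)) ≠ a + (d : Fin (m+6)))) := by
      intro i hi hne
      rw [hTm]
      simp only [mem_insert, mem_erase]
      constructor
      · rintro (h | h)
        · exact absurd (shift_inj hi (by omega) h) hne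
        · exact ⟨h.2, h.1⟩
      · exact fun h => Or.inr ⟨h.2, h.1⟩
    have hne1 : a + (k : Fin (m+6)) - 1 ≠ a + ((d-1:ℕ) : Fin (m+6)) := by
      intro h
      have h' : a + (k : Fin (m+6)) = a + (d : Fin (m+6)) := by
        linear_combination h - hcast1
      exact absurd (shift_inj (by omega) (by omega) h') (by omega)
    have hne2 : a + (k : Fin (m+6)) - 2 ≠ a + ((d-1:ℕ) : Fin (m+6)) := by
      intro h
      have h3 : a + ((d-1:ℕ) : Fin (m+6)) + 2 = a + ((d+1 : ℕ) : Fin (m+6)) := by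
        rw [Nat.cast_sub hd1]; push_cast; ring
      have h2 : a + (k : Fin (m+6)) = a + ((d+1:ℕ) : Fin (m+6)) := by
        linear_combination h + h3
      have h4 : ((k:ℕ) : Fin (m+6)) = ((d+1 : ℕ) : Fin (m+6)) := add_left_cancel h2
      by_cases hcase : d + 1 ≤ m + 5
      · exact absurd (fcast_inj (by omega) (by omega) h4) (by omega)
      · have hd6 : d + 1 = m + 6 := by omega
        rw [hd6, natCast_self_fin] at h4
        exact absurd (fcast_inj (by omega) (by omega) h4) (by omega)
    have ihres := ih (d-1) (by omega) (by omega) Tm hntm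
      (mem_insert_self _ _)
      (by
        intro j hj hjd
        rw [key j (by omega) (by omega)]
        push_neg
        intro hmemj
        exact absurd hmemj (hgap j hj (by omega)))
      (by
        rcases hside with hside | hside
        · left
          rw [hTm]
          simp only [mem_insert, mem_erase]
          push_neg
          exact ⟨hne1, fun _ => hside⟩
        · right
          rw [hTm]
          simp only [mem_insert, mem_erase]
          push_neg
          exact ⟨hne2, fun _ => hside⟩)
    have herase : Tm.erase (a + ((d-1:ℕ) : Fin (m+6))) = T.erase (a + (d : Fin (m+6))) := by
      rw [hTm]
      apply erase_insert
      intro hmm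
      exact hgap (d-1) (by omega) (by omega) (mem_of_mem_erase hmm)
    rw [herase] at ihres
    exact ⟨Relation.ReflTransGen.head hstep ihres.1, ihres.2⟩

end Steps
section Gather
variable {m : ℕ}

lemma cast_m5' : ((m+5:ℕ) : Fin (m+6)) = -1 := by
  have h : ((m+6:ℕ) : Fin (m+6)) = 0 := Fin.natCast_self _
  have h2 : ((m+5:ℕ) : Fin (m+6)) + 1 = 0 := by rw [← h]; push_cast; ring
  linear_combination h2

lemma cast_m4' : ((m+4:ℕ) : Fin (m+6)) = -2 := by
  have h : ((m+6:ℕ) : Fin (m+6)) = 0 := Fin.natCast_self _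
  have h2 : ((m+4:ℕ) : Fin (m+6)) + 2 = 0 := by rw [← h]; push_cast; ring
  linear_combination h2

lemma cast_m3' : ((m+3:ℕ) : Fin (m+6)) = -3 := by
  have h : ((m+6:ℕ) : Fin (m+6)) = 0 := Fin.natCast_self _
  have h2 : ((m+3:ℕ) : Fin (m+6)) + 3 = 0 := by rw [← h]; push_cast; ring
  linear_combination h2

lemma offset_repr (c y : Fin (m+6)) (hne : y ≠ c) :
    ∃ j : ℕ, 1 ≤ j ∧ j ≤ m+5 ∧ c + (j : Fin (m+6)) = y := by
  refine ⟨(y - c).val, ?_, ?_, ?_⟩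
  · by_contra h
    have h0 : (y - c).val = 0 := by omega
    have : y - c = 0 := Fin.ext (by simpa using h0)
    exact hne (by linear_combination this)
  · have := (y - c).isLt; omega
  · rw [Fin.cast_val_eq_self]; ring

lemma exists_min_offset {T : Finset (Fin (m+6))} {c : Fin (m+6)} {k j0 : ℕ} (hk : k ≤ j0)
    (hmem : c + (j0 : Fin (m+6)) ∈ T) :
    ∃ d : ℕ, k ≤ d ∧ d ≤ j0 ∧ c + (d : Fin (m+6)) ∈ T ∧
      ∀ j, k ≤ j → j < d → c + (j : Fin (m+6)) ∉ T := by
  classical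
  have hex : ∃ j, k ≤ j ∧ j ≤ j0 ∧ c + (j : Fin (m+6)) ∈ T := ⟨j0, hk, le_refl _, hmem⟩
  have spec := Nat.find_spec hex
  refine ⟨Nat.find hex, spec.1, spec.2.1, spec.2.2, ?_⟩
  intro j hj hjd hmemj
  have hle := spec.2.1
  exact Nat.find_min hex hjd ⟨hj, by omega, hmemj⟩

lemma gather {T : Finset (Fin (m+6))} (hT : NoTriple T) (hcard : 4 ≤ T.card) :
    ∃ T' : Finset (Fin (m+6)), Relation.ReflTransGen StepT T T' ∧ NoTriple T' ∧
      ∃ a : Fin (m+6), a ∈ T' ∧ a + 1 ∈ T' ∧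
        a + ((3:ℕ) : Fin (m+6)) ∈ T' ∧ a + ((4:ℕ) : Fin (m+6)) ∈ T' := by
  classical
  -- Phase 1 : produce a pair
  have phase1 : ∃ T1 : Finset (Fin (m+6)), Relation.ReflTransGen StepT T T1 ∧ NoTriple T1 ∧
      T1.card = T.card ∧ ∃ b : Fin (m+6), b ∈ T1 ∧ b + 1 ∈ T1 := by
    by_cases hpair : ∃ x, x ∈ T ∧ x + 1 ∈ T
    · obtain ⟨x, hx, hx1⟩ := hpair
      exact ⟨T, Relation.ReflTransGen.refl, hT, rfl, x, hx, hx1⟩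
    · push_neg at hpair
      obtain ⟨a, ha⟩ := card_pos.mp (by omega : 0 < T.card)
      have ha1 : a + 1 ∉ T := hpair a ha
      have ham1 : a - 1 ∉ T := fun h =>
        hpair (a-1) h (by rwa [show a - 1 + 1 = a from by ring])
      have herase : 0 < (T.erase a).card := by
        rw [card_erase_of_mem ha]; omega
      obtain ⟨y, hy⟩ := card_pos.mp herase
      have hyT : y ∈ T := mem_of_mem_erase hy
      have hyne : y ≠ a := ne_of_mem_erase hy
      obtain ⟨j, hj1, hj5, hjy⟩ := offset_repr a y hyne
      have hj2 : 2 ≤ j := by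
        rcases Nat.lt_or_ge j 2 with h | h
        · interval_cases j
          · exfalso
            apply ha1
            rw [show a + 1 = a + ((1:ℕ) : Fin (m+6)) from by push_cast; ring, hjy]
            exact hyT
        · exact h
      obtain ⟨d, hd2, hdj, hdmem, hdmin⟩ := exists_min_offset hj2 (by rwa [hjy])
      have hgap1 : ∀ i : ℕ, 1 ≤ i → i < d → a + (i : Fin (m+6)) ∉ T := by
        intro i hi hid
        rcases Nat.lt_or_ge i 2 with h | h
        · have : i = 1 := by omega
          subst this
          rwa [Nat.cast_one]
        · exact hdmin i h hid
      have hside : a + ((1:ℕ) : Fin (m+6)) - 1 ∉ T ∨ a + ((1:ℕ) : Fin (m+6)) - 2 ∉ T :=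
        Or.inr (by rwa [show a + ((1:ℕ) : Fin (m+6)) - 2 = a - 1 from by push_cast; ring])
      obtain ⟨hreach, hnt1⟩ := pull (le_refl 1) (d - 1) d (by omega) (by omega) T hT
        hdmem hgap1 hside
      refine ⟨_, hreach, hnt1, (reach_card hreach), a, ?_, ?_⟩
      · apply mem_insert_of_mem
        apply mem_erase.mpr
        refine ⟨?_, ha⟩
        exact shift_ne (a := a) (i := 0) (j := d) (by push_cast; ring) rfl
          (by omega) (by omega) (by omega)
      · rw [show a + 1 = a + ((1:ℕ) : Fin (m+6)) from by push_cast; ring]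
        exact mem_insert_self _ _
  obtain ⟨T1, hreachT1, hnt1, hcard1, b, hb, hb1⟩ := phase1
  have hb2 : b + 2 ∉ T1 := fun h => hnt1 b ⟨hb, hb1, h⟩
  have hbm1 : b + 1 + ((m+5:ℕ) : Fin (m+6)) = b := by rw [cast_m5']; ring
  -- Phase 2 : pull a hole to b+3
  have herase2 : 0 < ((T1.erase b).erase (b+1)).card := by
    rw [card_erase_of_mem (mem_erase.mpr ⟨?_, hb1⟩), card_erase_of_mem hb]
    · omega
    · exact shift_ne (a := b) (i := 1) (j := 0) (by push_cast; ring) (by push_cast; ring)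
        (by omega) (by omega) (by omega)
  obtain ⟨y, hy⟩ := card_pos.mp herase2
  have hyT1 : y ∈ T1 := mem_of_mem_erase (mem_of_mem_erase hy)
  have hyneb : y ≠ b := ne_of_mem_erase (mem_of_mem_erase hy)
  have hynec : y ≠ b + 1 := ne_of_mem_erase hy
  obtain ⟨j, hj1, hj5, hjy⟩ := offset_repr (b+1) y hynec
  have hj2 : 2 ≤ j := by
    rcases Nat.lt_or_ge j 2 with h | h
    · interval_cases j
      · exfalso
        apply hb2
        rw [show b + 2 = b + 1 + ((1:ℕ) : Fin (m+6)) from by push_cast; ring, hjy]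
        exact hyT1
    · exact h
  have hj4 : j ≤ m + 4 := by
    rcases Nat.lt_or_ge j (m+5) with h | h
    · omega
    · exfalso
      have : j = m + 5 := by omega
      subst this
      rw [hbm1] at hjy
      exact hyneb hjy.symm
  obtain ⟨e, he2, hej, hemem, hemin⟩ := exists_min_offset hj2 (by rwa [hjy])
  have hside2 : b + 1 + ((2:ℕ) : Fin (m+6)) - 1 ∉ T1 ∨ b + 1 + ((2:ℕ) : Fin (m+6)) - 2 ∉ T1 :=
    Or.inl (by rwa [show b + 1 + ((2:ℕ) : Fin (m+6)) - 1 = b + 2 from by push_cast; ring])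
  obtain ⟨hreach2, hnt2⟩ := pull (by omega : 1 ≤ 2) (e - 2) e (by omega) (by omega) T1 hnt1
    hemem hemin hside2
  set T2 := insert (b + 1 + ((2:ℕ) : Fin (m+6))) (T1.erase (b + 1 + (e : Fin (m+6)))) with hT2
  have hcard2 : T2.card = T.card := by rw [reach_card hreach2, hcard1]
  have hbT2 : b ∈ T2 := by
    apply mem_insert_of_mem
    apply mem_erase.mpr
    refine ⟨?_, hb⟩
    exact shift_ne (a := b + 1) (i := m+5) (j := e) hbm1.symm rfl (by omega) (by omega)
      (by omega)
  have hcT2 : b + 1 ∈ T2 := by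
    apply mem_insert_of_mem
    apply mem_erase.mpr
    refine ⟨?_, hb1⟩
    exact shift_ne (a := b + 1) (i := 0) (j := e) (by push_cast; ring) rfl
      (by omega) (by omega) (by omega)
  have hc2T2 : b + 1 + ((2:ℕ) : Fin (m+6)) ∈ T2 := mem_insert_self _ _
  have hc1T2 : b + 2 ∉ T2 := by
    intro h
    rcases mem_insert.mp h with h | h
    · exact shift_ne (a := b + 1) (i := 1) (j := 2) (by push_cast; ring) rfl
        (by omega) (by omega) (by omega) h
    · exact hb2 (mem_of_mem_erase h)
  -- Phase 3 : pull a hole to b+4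
  have ne21 : b + 1 + ((2:ℕ) : Fin (m+6)) ≠ b + 1 := shift_ne (a := b+1) (i := 2) (j := 0)
    rfl (by push_cast; ring) (by omega) (by omega) (by omega)
  have ne2b : b + 1 + ((2:ℕ) : Fin (m+6)) ≠ b := shift_ne (a := b+1) (i := 2) (j := m+5)
    rfl hbm1.symm (by omega) (by omega) (by omega)
  have ne1b : b + 1 ≠ b := shift_ne (a := b+1) (i := 0) (j := m+5)
    (by push_cast; ring) hbm1.symm (by omega) (by omega) (by omega)
  have herase3 : 0 < (((T2.erase b).erase (b+1)).erase (b + 1 + ((2:ℕ) : Fin (m+6)))).card := by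
    rw [card_erase_of_mem (mem_erase.mpr ⟨ne21, mem_erase.mpr ⟨ne2b, hc2T2⟩⟩),
      card_erase_of_mem (mem_erase.mpr ⟨ne1b, hcT2⟩), card_erase_of_mem hbT2, hcard2]
    omega
  obtain ⟨z, hz⟩ := card_pos.mp herase3
  have hzT2 : z ∈ T2 := mem_of_mem_erase (mem_of_mem_erase (mem_of_mem_erase hz))
  have hzneb : z ≠ b := ne_of_mem_erase (mem_of_mem_erase (mem_of_mem_erase hz))
  have hznec : z ≠ b + 1 := ne_of_mem_erase (mem_of_mem_erase hz)
  have hznec2 : z ≠ b + 1 + ((2:ℕ) : Fin (m+6)) := ne_of_mem_erase hz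
  obtain ⟨f, hf1, hf5, hfz⟩ := offset_repr (b + 1 + ((2:ℕ) : Fin (m+6))) z hznec2
  have hfm2 : f ≤ m + 2 := by
    by_contra hcon
    push_neg at hcon
    have : f = m + 3 ∨ f = m + 4 ∨ f = m + 5 := by omega
    rcases this with rfl | rfl | rfl
    · -- z = b
      apply hzneb
      rw [← hfz, cast_m3']
      push_cast
      ring
    · -- z = b + 1
      apply hznec
      rw [← hfz, cast_m4']
      push_cast
      ring
    · -- z = b + 2 ∉ T2, contradiction
      apply hc1T2
      rw [show b + 2 = b + 1 + ((2:ℕ) : Fin (m+6)) + ((m+5:ℕ) : Fin (m+6)) from by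
        rw [cast_m5']; push_cast; ring, hfz]
      exact hzT2
  obtain ⟨g, hg1, hgf, hgmem, hgmin⟩ := exists_min_offset (hf1 : 1 ≤ f) (by rwa [hfz])
  by_cases hgone : g = 1
  · -- already in pattern
    subst hgone
    refine ⟨T2, Relation.ReflTransGen.trans hreachT1 hreach2, hnt2, b, hbT2, hcT2, ?_, ?_⟩
    · rwa [show b + ((3:ℕ) : Fin (m+6)) = b + 1 + ((2:ℕ) : Fin (m+6)) from by push_cast; ring]
    · rw [show b + ((4:ℕ) : Fin (m+6)) =
        b + 1 + ((2:ℕ) : Fin (m+6)) + ((1:ℕ) : Fin (m+6)) from by push_cast; ring]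
      exact hgmem
  · have hg2 : 2 ≤ g := by omega
    have hside3 : b + 1 + ((2:ℕ) : Fin (m+6)) + ((1:ℕ) : Fin (m+6)) - 1 ∉ T2 ∨
        b + 1 + ((2:ℕ) : Fin (m+6)) + ((1:ℕ) : Fin (m+6)) - 2 ∉ T2 :=
      Or.inr (by rwa [show b + 1 + ((2:ℕ) : Fin (m+6)) + ((1:ℕ) : Fin (m+6)) - 2 = b + 2
        from by push_cast; ring])
    obtain ⟨hreach3, hnt3⟩ := pull (le_refl 1) (g - 1) g (by omega) (by omega) T2 hnt2
      hgmem hgmin hside3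
    set q := b + 1 + ((2:ℕ) : Fin (m+6)) + (g : Fin (m+6)) with hq
    have hqoff : q = b + 1 + ((g+2 : ℕ) : Fin (m+6)) := by rw [hq]; push_cast; ring
    set T3 := insert (b + 1 + ((2:ℕ) : Fin (m+6)) + ((1:ℕ) : Fin (m+6))) (T2.erase q) with hT3
    refine ⟨T3, Relation.ReflTransGen.trans hreachT1
      (Relation.ReflTransGen.trans hreach2 hreach3), hnt3, b, ?_, ?_, ?_, ?_⟩
    · apply mem_insert_of_mem
      apply mem_erase.mpr
      refine ⟨?_, hbT2⟩
      rw [hqoff]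
      exact shift_ne (a := b + 1) (i := m+5) (j := g+2) hbm1.symm rfl (by omega) (by omega)
        (by omega)
    · apply mem_insert_of_mem
      apply mem_erase.mpr
      refine ⟨?_, hcT2⟩
      rw [hqoff]
      exact shift_ne (a := b + 1) (i := 0) (j := g+2) (by push_cast; ring) rfl
        (by omega) (by omega) (by omega)
    · rw [show b + ((3:ℕ) : Fin (m+6)) = b + 1 + ((2:ℕ) : Fin (m+6)) from by push_cast; ring]
      apply mem_insert_of_mem
      apply mem_erase.mpr
      refine ⟨?_, hc2T2⟩
      rw [hqoff]
      exact shift_ne (a := b + 1) (i := 2) (j := g+2) rfl rfl (by omega) (by omega) (by omega)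
    · rw [show b + ((4:ℕ) : Fin (m+6)) =
        b + 1 + ((2:ℕ) : Fin (m+6)) + ((1:ℕ) : Fin (m+6)) from by push_cast; ring]
      exact mem_insert_self _ _

end Gather
section Final
variable {m : ℕ}

lemma lower {S : Finset (Fin (m+6))} (h : AutDomSet (cycleGraph (m+6)) S) :
    m + 3 ≤ S.card := by
  obtain ⟨F, hF, hSF⟩ := h
  by_contra hcon
  push_neg at hcon
  have hdom : Dominates (cycleGraph (m+6)) S := hF.1 S hSF
  have hnt : NoTriple Sᶜ := dominates_iff.mp hdom
  have hcardc : 4 ≤ Sᶜ.card := by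
    rw [card_compl, Fintype.card_fin]
    have := card_le_card (subset_univ S)
    rw [card_univ, Fintype.card_fin] at this
    omega
  obtain ⟨T', hreach, hnt', a, ha, ha1, ha3, ha4⟩ := gather hnt hcardc
  have hT'F : T'ᶜ ∈ F := reach_mem_family hF hreach (by rw [compl_compl]; exact hSF)
  have hv : a + 1 ∉ T'ᶜ := fun hc => (mem_compl.mp hc) ha1
  obtain ⟨S', hS'F, hadj, hvS'⟩ := hF.2.1 T'ᶜ hT'F (a+1) hv
  obtain ⟨x, y, hx, hy, hxy, rfl⟩ := hadj
  have hya : y = a + 1 := by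
    rcases mem_insert.mp hvS' with h | h
    · exact h.symm
    · exact absurd (mem_of_mem_erase h) hv
  subst hya
  have hxT' : x ∉ T' := mem_compl.mp hx
  have hxa2 : x = a + 2 := by
    rcases adj_iff.mp hxy with hx1 | hx1
    · rw [hx1]; ring
    · exfalso
      apply hxT'
      rwa [show x = a from by rw [hx1]; ring]
  have hdomS' : Dominates (cycleGraph (m+6)) (insert (a+1) ((T'ᶜ).erase x)) :=
    hF.1 _ hS'F
  have hntS' : NoTriple (insert (a+1) ((T'ᶜ).erase x))ᶜ := dominates_iff.mp hdomS'
  rw [compl_move hxy.ne, compl_compl] at hntS'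
  apply hntS' (a + 2)
  refine ⟨?_, ?_, ?_⟩
  · rw [← hxa2]
    exact mem_insert_self _ _
  · apply mem_insert_of_mem
    apply mem_erase.mpr
    constructor
    · exact shift_ne (a := a) (i := 3) (j := 1) (by push_cast; ring) (by push_cast; ring)
        (by omega) (by omega) (by omega)
    · rwa [show a + 2 + 1 = a + ((3:ℕ) : Fin (m+6)) from by push_cast; ring]
  · apply mem_insert_of_mem
    apply mem_erase.mpr
    constructor
    · exact shift_ne (a := a) (i := 4) (j := 1) (by push_cast; ring) (by push_cast; ring)
        (by omega) (by omega) (by omega)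
    · rwa [show a + 2 + 2 = a + ((4:ℕ) : Fin (m+6)) from by push_cast; ring]

end Final

/-- the autonomous domination number of the cycle `C_n` is `n - 3`
for `n ≥ 6`. -/
theorem autDomNum_cycleGraph (n : ℕ) (hn : 6 ≤ n) :
    autDomNum (SimpleGraph.cycleGraph n) = n - 3 := by
  obtain ⟨m, rfl⟩ : ∃ m, n = m + 6 := ⟨n - 6, by omega⟩
  have hmem := upper_mem (m := m)
  have hlb : ∀ k ∈ {k | ∃ S : Finset (Fin (m+6)),
      AutDomSet (SimpleGraph.cycleGraph (m+6)) S ∧ S.card = k}, m + 3 ≤ k := by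
    rintro k ⟨S, hS, rfl⟩
    exact lower hS
  have hne : {k | ∃ S : Finset (Fin (m+6)),
      AutDomSet (SimpleGraph.cycleGraph (m+6)) S ∧ S.card = k}.Nonempty := ⟨m+3, hmem⟩
  have h2 := hlb _ (Nat.sInf_mem hne)
  have h3 := Nat.sInf_le hmem
  show sInf _ = m + 6 - 3
  omega
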